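/- For a generic nonzero q ∈ ℂ and a positive integer d, the rational function identity ∑_{σ ∈ S_3} [ ( q^{−3d/2} z_{σ(1)}^d − (q^{d/2} + q^{−d/2}) z_{σ(2)}^d + q^{3d/2} z_{σ(3)}^d ) · ∏_{1≤a<b≤3} ( (z_{σ(a)}^d − z_{σ(b)}^d)(z_{σ(a)}^d − q^{−2d} z_{σ(b)}^d) / (z_{σ(a)}^d + q^{−d} z_{σ(b)}^d) ) ] = 0 holds in ℂ(z_1, z_2, z_3). (It suffices to prove the case d = 1 after substituting u_i = z_i^d.) -/

import Mathlib

lemma serre_comb {K : Type*} [Field K] (A P1 P2 P3 D1 D2 D3 C : K)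
    (h1 : D1 ≠ 0) (h2 : D2 ≠ 0) (h3 : D3 ≠ 0) (hC : C ≠ 0) :
    A * (P1 / D1 * (P2 / D2) * (P3 / D3)) = A * P1 * P2 * P3 * C / (D1 * D2 * D3 * C) := by
  field_simp


set_option maxHeartbeats 4000000 in
lemma serre_key' {K : Type*} [Field K] (b x y z : K)
    (h01 : b ^ 2 * x + y ≠ 0) (h10 : b ^ 2 * y + x ≠ 0)
    (h02 : b ^ 2 * x + z ≠ 0) (h20 : b ^ 2 * z + x ≠ 0)
    (h12 : b ^ 2 * y + z ≠ 0) (h21 : b ^ 2 * z + y ≠ 0) :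
    (x - (b ^ 4 + b ^ 2) * y + b ^ 6 * z) *
        ((x - y) * (b ^ 4 * x - y) / (b ^ 2 * x + y) *
          ((x - z) * (b ^ 4 * x - z) / (b ^ 2 * x + z)) *
          ((y - z) * (b ^ 4 * y - z) / (b ^ 2 * y + z))) +
      ((y - (b ^ 4 + b ^ 2) * x + b ^ 6 * z) *
        ((y - x) * (b ^ 4 * y - x) / (b ^ 2 * y + x) *
          ((y - z) * (b ^ 4 * y - z) / (b ^ 2 * y + z)) *
          ((x - z) * (b ^ 4 * x - z) / (b ^ 2 * x + z))) +
      ((z - (b ^ 4 + b ^ 2) * y + b ^ 6 * x) *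
        ((z - y) * (b ^ 4 * z - y) / (b ^ 2 * z + y) *
          ((z - x) * (b ^ 4 * z - x) / (b ^ 2 * z + x)) *
          ((y - x) * (b ^ 4 * y - x) / (b ^ 2 * y + x))) +
      ((x - (b ^ 4 + b ^ 2) * z + b ^ 6 * y) *
        ((x - z) * (b ^ 4 * x - z) / (b ^ 2 * x + z) *
          ((x - y) * (b ^ 4 * x - y) / (b ^ 2 * x + y)) *
          ((z - y) * (b ^ 4 * z - y) / (b ^ 2 * z + y))) +
      ((z - (b ^ 4 + b ^ 2) * x + b ^ 6 * y) *
        ((z - x) * (b ^ 4 * z - x) / (b ^ 2 * z + x) *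
          ((z - y) * (b ^ 4 * z - y) / (b ^ 2 * z + y)) *
          ((x - y) * (b ^ 4 * x - y) / (b ^ 2 * x + y))) +
      ((y - (b ^ 4 + b ^ 2) * z + b ^ 6 * x) *
        ((y - z) * (b ^ 4 * y - z) / (b ^ 2 * y + z) *
          ((y - x) * (b ^ 4 * y - x) / (b ^ 2 * y + x)) *
          ((z - x) * (b ^ 4 * z - x) / (b ^ 2 * z + x)))))))) = 0 := by
  rw [serre_comb _ _ _ _ _ _ _ ((b ^ 2 * y + x) * (b ^ 2 * z + x) * (b ^ 2 * z + y)) h01 h02 h12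
        (mul_ne_zero (mul_ne_zero h10 h20) h21),
      serre_comb _ _ _ _ _ _ _ ((b ^ 2 * x + y) * (b ^ 2 * z + x) * (b ^ 2 * z + y)) h10 h12 h02
        (mul_ne_zero (mul_ne_zero h01 h20) h21),
      serre_comb _ _ _ _ _ _ _ ((b ^ 2 * x + y) * (b ^ 2 * x + z) * (b ^ 2 * y + z)) h21 h20 h10
        (mul_ne_zero (mul_ne_zero h01 h02) h12),
      serre_comb _ _ _ _ _ _ _ ((b ^ 2 * y + z) * (b ^ 2 * y + x) * (b ^ 2 * z + x)) h02 h01 h21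
        (mul_ne_zero (mul_ne_zero h12 h10) h20),
      serre_comb _ _ _ _ _ _ _ ((b ^ 2 * x + z) * (b ^ 2 * y + z) * (b ^ 2 * y + x)) h20 h21 h01
        (mul_ne_zero (mul_ne_zero h02 h12) h10),
      serre_comb _ _ _ _ _ _ _ ((b ^ 2 * x + y) * (b ^ 2 * x + z) * (b ^ 2 * z + y)) h12 h10 h20
        (mul_ne_zero (mul_ne_zero h01 h02) h21)]
  rw [show (b ^ 2 * x + y) * (b ^ 2 * x + z) * (b ^ 2 * y + z) *
        ((b ^ 2 * y + x) * (b ^ 2 * z + x) * (b ^ 2 * z + y)) =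
      (b ^ 2 * x + y) * (b ^ 2 * x + z) * (b ^ 2 * y + z) * (b ^ 2 * y + x) * (b ^ 2 * z + x) * (b ^ 2 * z + y) from by ring,
    show (b ^ 2 * y + x) * (b ^ 2 * y + z) * (b ^ 2 * x + z) *
        ((b ^ 2 * x + y) * (b ^ 2 * z + x) * (b ^ 2 * z + y)) =
      (b ^ 2 * x + y) * (b ^ 2 * x + z) * (b ^ 2 * y + z) * (b ^ 2 * y + x) * (b ^ 2 * z + x) * (b ^ 2 * z + y) from by ring,
    show (b ^ 2 * z + y) * (b ^ 2 * z + x) * (b ^ 2 * y + x) *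
        ((b ^ 2 * x + y) * (b ^ 2 * x + z) * (b ^ 2 * y + z)) =
      (b ^ 2 * x + y) * (b ^ 2 * x + z) * (b ^ 2 * y + z) * (b ^ 2 * y + x) * (b ^ 2 * z + x) * (b ^ 2 * z + y) from by ring,
    show (b ^ 2 * x + z) * (b ^ 2 * x + y) * (b ^ 2 * z + y) *
        ((b ^ 2 * y + z) * (b ^ 2 * y + x) * (b ^ 2 * z + x)) =
      (b ^ 2 * x + y) * (b ^ 2 * x + z) * (b ^ 2 * y + z) * (b ^ 2 * y + x) * (b ^ 2 * z + x) * (b ^ 2 * z + y) from by ring,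
    show (b ^ 2 * z + x) * (b ^ 2 * z + y) * (b ^ 2 * x + y) *
        ((b ^ 2 * x + z) * (b ^ 2 * y + z) * (b ^ 2 * y + x)) =
      (b ^ 2 * x + y) * (b ^ 2 * x + z) * (b ^ 2 * y + z) * (b ^ 2 * y + x) * (b ^ 2 * z + x) * (b ^ 2 * z + y) from by ring,
    show (b ^ 2 * y + z) * (b ^ 2 * y + x) * (b ^ 2 * z + x) *
        ((b ^ 2 * x + y) * (b ^ 2 * x + z) * (b ^ 2 * z + y)) =
      (b ^ 2 * x + y) * (b ^ 2 * x + z) * (b ^ 2 * y + z) * (b ^ 2 * y + x) * (b ^ 2 * z + x) * (b ^ 2 * z + y) from by ring]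
  rw [← add_div, ← add_div, ← add_div, ← add_div, ← add_div,
    div_eq_zero_iff]
  left
  ring

set_option maxHeartbeats 1000000 in
lemma serre_main {K : Type*} [Field K] (b x y z : K) (hb : b ≠ 0)
    (h01 : b ^ 2 * x + y ≠ 0) (h10 : b ^ 2 * y + x ≠ 0)
    (h02 : b ^ 2 * x + z ≠ 0) (h20 : b ^ 2 * z + x ≠ 0)
    (h12 : b ^ 2 * y + z ≠ 0) (h21 : b ^ 2 * z + y ≠ 0) :
    (b⁻¹ ^ 3 * x - (b + b⁻¹) * y + b ^ 3 * z) * ((x - y) * (x - b⁻¹ ^ 4 * y) / (x + b⁻¹ ^ 2 * y) * ((x - z) * (x - b⁻¹ ^ 4 * z) / (x + b⁻¹ ^ 2 * z)) * ((y - z) * (y - b⁻¹ ^ 4 * z) / (y + b⁻¹ ^ 2 * z))) + ((b⁻¹ ^ 3 * y - (b + b⁻¹) * x + b ^ 3 * z) * ((y - x) * (y - b⁻¹ ^ 4 * x) / (y + b⁻¹ ^ 2 * x) * ((y - z) * (y - b⁻¹ ^ 4 * z) / (y + b⁻¹ ^ 2 * z)) * ((x - z) * (x - b⁻¹ ^ 4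 * z) / (x + b⁻¹ ^ 2 * z))) + ((b⁻¹ ^ 3 * z - (b + b⁻¹) * y + b ^ 3 * x) * ((z - y) * (z - b⁻¹ ^ 4 * y) / (z + b⁻¹ ^ 2 * y) * ((z - x) * (z - b⁻¹ ^ 4 * x) / (z + b⁻¹ ^ 2 * x)) * ((y - x) * (y - b⁻¹ ^ 4 * x) / (y + b⁻¹ ^ 2 * x))) + ((b⁻¹ ^ 3 * x - (b + b⁻¹) * z + b ^ 3 * y) * ((x - z) * (x - b⁻¹ ^ 4 * z) / (x + b⁻¹ ^ 2 * z) * ((x - y) * (x - b⁻¹ ^ 4 * y) / (x + b⁻¹ ^ 2 * y)) * ((z - y) * (z - b⁻¹ ^ 4 * y) / (z + b⁻¹ ^ 2 * y))) + ((b⁻¹ ^ 3 * z - (b + b⁻¹) * x + b ^ 3 * y) * ((z - x) * (z - b⁻¹ ^ 4 * x) / (z + b⁻¹ ^ 2 * x) * ((z - y) * (z - b⁻¹ ^ 4 * y) / (z + b⁻¹ ^ 2 * y)) * ((x - y) * (x - b⁻¹ ^ 4 * y) / (x + b⁻¹ ^ 2 * y))) + (b⁻¹ ^ 3 * y - (b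 + b⁻¹) * z + b ^ 3 * x) * ((y - z) * (y - b⁻¹ ^ 4 * z) / (y + b⁻¹ ^ 2 * z) * ((y - x) * (y - b⁻¹ ^ 4 * x) / (y + b⁻¹ ^ 2 * x)) * ((z - x) * (z - b⁻¹ ^ 4 * x) / (z + b⁻¹ ^ 2 * x))))))) = 0 := by
  have hb2 : (b : K) ^ 2 ≠ 0 := pow_ne_zero 2 hb
  have g : ∀ v w : K, b ^ 2 * v + w ≠ 0 →
      (v - w) * (v - b⁻¹ ^ 4 * w) / (v + b⁻¹ ^ 2 * w) =
        b⁻¹ ^ 2 * ((v - w) * (b ^ 4 * v - w) / (b ^ 2 * v + w)) := by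
    intro v w hD
    have hvw : v + b⁻¹ ^ 2 * w ≠ 0 := by
      have e : v + b⁻¹ ^ 2 * w = (b ^ 2 * v + w) / b ^ 2 := by
        rw [eq_div_iff hb2]; field_simp
      rw [e]
      exact div_ne_zero hD hb2
    rw [mul_div_assoc', div_eq_div_iff hvw hD]
    field_simp
  have c : ∀ v w t : K, b⁻¹ ^ 3 * v - (b + b⁻¹) * w + b ^ 3 * t =
      b⁻¹ ^ 3 * (v - (b ^ 4 + b ^ 2) * w + b ^ 6 * t) := by
    intro v w t
    field_simp
  have factor : ∀ A B C D : K, b⁻¹ ^ 3 * A * (b⁻¹ ^ 2 * B * (b⁻¹ ^ 2 * C) * (b⁻¹ ^ 2 * D)) =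
      b⁻¹ ^ 9 * (A * (B * C * D)) := by
    intro A B C D
    ring
  rw [g x y h01, g y x h10, g x z h02, g z x h20, g y z h12, g z y h21, c x y z, c y x z,
    c z y x, c x z y, c z x y, c y z x]
  rw [factor, factor, factor, factor, factor, factor]
  rw [← mul_add, ← mul_add, ← mul_add, ← mul_add, ← mul_add]
  rw [serre_key' b x y z h01 h10 h02 h20 h12 h21, mul_zero]

set_option maxHeartbeats 4000000 in
set_option synthInstance.maxHeartbeats 400000 in
set_option maxRecDepth 8000 in
theorem stmt_7 (q s : ℂ) (hq : q ≠ 0) (hs : s ^ 2 = q)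
    (hgen : ∀ n : ℕ, 0 < n → q ^ n ≠ 1) (d : ℕ) (hd : 0 < d) :
    let K := FractionRing (MvPolynomial (Fin 3) ℂ)
    let u : Fin 3 → K := fun i =>
      (algebraMap (MvPolynomial (Fin 3) ℂ) K (MvPolynomial.X i)) ^ d
    let qK : K := algebraMap (MvPolynomial (Fin 3) ℂ) K (MvPolynomial.C q)
    let sK : K := algebraMap (MvPolynomial (Fin 3) ℂ) K (MvPolynomial.C s)
    let F : Equiv.Perm (Fin 3) → Fin 3 → Fin 3 → K := fun σ a b =>
      ((u (σ a) - u (σ b)) * (u (σ a) - qK ^ (-(2 * (d : ℤ))) * u (σ b))) /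
        (u (σ a) + qK ^ (-(d : ℤ)) * u (σ b))
    ∑ σ : Equiv.Perm (Fin 3),
      (sK ^ (-(3 * (d : ℤ))) * u (σ 0) - (sK ^ (d : ℤ) + sK ^ (-(d : ℤ))) * u (σ 1)
          + sK ^ (3 * (d : ℤ)) * u (σ 2)) *
        (F σ 0 1 * F σ 0 2 * F σ 1 2) = 0 := by
  intro K u qK sK F
  have hs0 : s ≠ 0 := by intro h; apply hq; rw [← hs, h]; ring
  have hsK : sK ≠ 0 := by
    simp only [sK, ne_eq, IsFractionRing.to_map_eq_zero_iff, MvPolynomial.C_eq_zero]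
    exact hs0
  have hqK : qK ≠ 0 := by
    simp only [qK, ne_eq, IsFractionRing.to_map_eq_zero_iff, MvPolynomial.C_eq_zero]
    exact hq
  set b : K := sK ^ d with hbdef
  have hb : b ≠ 0 := pow_ne_zero _ hsK
  have hqs : qK = sK ^ 2 := by simp only [qK, sK, ← hs, map_pow]
  have h1 : sK ^ (-(3 * (d : ℤ))) = b⁻¹ ^ 3 := by
    rw [show -(3 * (d : ℤ)) = -((3 * d : ℕ) : ℤ) by push_cast; ring, zpow_neg, zpow_natCast,
      hbdef, inv_pow, ← pow_mul]
    congr 2; omega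
  have h2 : sK ^ ((d : ℤ)) = b := by rw [hbdef, zpow_natCast]
  have h3 : sK ^ (-(d : ℤ)) = b⁻¹ := by rw [hbdef, ← zpow_natCast sK, ← zpow_neg]
  have h4 : sK ^ (3 * (d : ℤ)) = b ^ 3 := by
    rw [show (3 * (d : ℤ)) = ((3 * d : ℕ) : ℤ) by push_cast; ring, zpow_natCast, hbdef,
      ← pow_mul]
    congr 1; omega
  have h5 : qK ^ (-(2 * (d : ℤ))) = b⁻¹ ^ 4 := by
    rw [show -(2 * (d : ℤ)) = -((2 * d : ℕ) : ℤ) by push_cast; ring, zpow_neg, zpow_natCast,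
      hqs, hbdef, inv_pow, ← pow_mul, ← pow_mul]
    congr 2; omega
  have h6 : qK ^ (-(d : ℤ)) = b⁻¹ ^ 2 := by
    rw [zpow_neg, zpow_natCast, hqs, hbdef, inv_pow, ← pow_mul, ← pow_mul]
    congr 2; omega
  have hb2q : b ^ 2 = qK ^ d := by rw [hqs, hbdef, ← pow_mul, ← pow_mul, mul_comm]
  have hden : ∀ i j : Fin 3, i ≠ j → b ^ 2 * u i + u j ≠ 0 := by
    intro i j hij h0
    rw [hb2q] at h0
    have h3' : algebraMap (MvPolynomial (Fin 3) ℂ) K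
        (MvPolynomial.C q ^ d * MvPolynomial.X i ^ d + MvPolynomial.X j ^ d) = 0 := by
      rw [map_add, map_mul, map_pow, map_pow, map_pow]; exact h0
    have h4' : (MvPolynomial.C q ^ d * MvPolynomial.X i ^ d + MvPolynomial.X j ^ d :
        MvPolynomial (Fin 3) ℂ) = 0 :=
      (IsFractionRing.to_map_eq_zero_iff (K := K)).mp h3'
    have h5' := congrArg (MvPolynomial.eval fun k => if k = j then (1 : ℂ) else 0) h4'
    simp [hij, zero_pow hd.ne'] at h5'
  have dconv : ∀ i j : Fin 3, u i + b⁻¹ ^ 2 * u j = (b ^ 2 * u i + u j) / b ^ 2 := by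
    intro i j
    rw [eq_div_iff (pow_ne_zero 2 hb)]
    rw [inv_pow]
    linear_combination (u j) * (inv_mul_cancel₀ (pow_ne_zero 2 hb))
  rw [show (Finset.univ : Finset (Equiv.Perm (Fin 3))) =
    {1, Equiv.swap 0 1, Equiv.swap 0 2, Equiv.swap 1 2,
      Equiv.swap 0 1 * Equiv.swap 0 2, Equiv.swap 0 2 * Equiv.swap 0 1} from by decide]
  rw [Finset.sum_insert (by decide), Finset.sum_insert (by decide),
    Finset.sum_insert (by decide), Finset.sum_insert (by decide),
    Finset.sum_insert (by decide), Finset.sum_singleton]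
  simp only [F,
    show ((1 : Equiv.Perm (Fin 3)) 0) = 0 from by decide,
    show ((1 : Equiv.Perm (Fin 3)) 1) = 1 from by decide,
    show ((1 : Equiv.Perm (Fin 3)) 2) = 2 from by decide,
    show (Equiv.swap (0 : Fin 3) 1) 0 = 1 from by decide,
    show (Equiv.swap (0 : Fin 3) 1) 1 = 0 from by decide,
    show (Equiv.swap (0 : Fin 3) 1) 2 = 2 from by decide,
    show (Equiv.swap (0 : Fin 3) 2) 0 = 2 from by decide,
    show (Equiv.swap (0 : Fin 3) 2) 1 = 1 from by decide,
    show (Equiv.swap (0 : Fin 3) 2) 2 = 0 from by decide,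
    show (Equiv.swap (1 : Fin 3) 2) 0 = 0 from by decide,
    show (Equiv.swap (1 : Fin 3) 2) 1 = 2 from by decide,
    show (Equiv.swap (1 : Fin 3) 2) 2 = 1 from by decide,
    show ((Equiv.swap (0 : Fin 3) 1 * Equiv.swap 0 2) : Equiv.Perm (Fin 3)) 0 = 2 from by decide,
    show ((Equiv.swap (0 : Fin 3) 1 * Equiv.swap 0 2) : Equiv.Perm (Fin 3)) 1 = 0 from by decide,
    show ((Equiv.swap (0 : Fin 3) 1 * Equiv.swap 0 2) : Equiv.Perm (Fin 3)) 2 = 1 from by decide,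
    show ((Equiv.swap (0 : Fin 3) 2 * Equiv.swap 0 1) : Equiv.Perm (Fin 3)) 0 = 1 from by decide,
    show ((Equiv.swap (0 : Fin 3) 2 * Equiv.swap 0 1) : Equiv.Perm (Fin 3)) 1 = 2 from by decide,
    show ((Equiv.swap (0 : Fin 3) 2 * Equiv.swap 0 1) : Equiv.Perm (Fin 3)) 2 = 0 from by decide,
    h1, h2, h3, h4, h5, h6]
  exact serre_main b (u 0) (u 1) (u 2) hb (hden 0 1 (by decide)) (hden 1 0 (by decide))
    (hden 0 2 (by decide)) (hden 2 0 (by decide)) (hden 1 2 (by decide)) (hden 2 1 (by decide))
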